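/- arXiv:2509.03910 — 4 statements merged into one kernel-verified Lean document; each statement's English description precedes it below -/
import Mathlib

section
/- Let Ž(x,y) = (Ž₁(x), Ž₂(x,y)) be an invertible lower-triangular map and Ĥ(x,y) = (Ĥ₁(x,y), Ĥ₂(y)) an invertible upper-triangular map on ℝⁿ × ℝᵐ, both pushing forward μ_X ⊗ μ_Y to the same joint measure μ_{U,F}. Define F_like(y;u) = Ž₂(Ž₁⁻¹(u), y), F_post(x;f) = Ĥ₁(x, Ĥ₂⁻¹(f)), and R(x,f) = (F_post(x;f), F_like⁻¹(f; F_post(x;f))). Then R pushes forward μ_X ⊗ ((Ĥ₂)_# μ_Y) to ((Ž₁)_# μ_X) ⊗ μ_Y, i.e., R_#(μ_X ⊗ μ_F) = μ_U ⊗ μ_Y where μ_U, μ_F are the marginals of μ_{U,F}. -/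
open MeasureTheory

/-- Theorem 1(iii): With `Ž` lower-triangular and `Ĥ` upper-triangular, both
invertible and pushing `μ_X ⊗ μ_Y` to `μ_{U,F}`, the combined map
`R(x,f) = (F_post(x;f), F_like⁻¹(f; F_post(x;f)))` pushes `μ_X ⊗ μ_F` to `μ_U ⊗ μ_Y`,
where `μ_U = (Ž₁)_# μ_X` and `μ_F = (Ĥ₂)_# μ_Y`. -/
theorem stmt_5 {n m : ℕ}
    (μX : Measure (Fin n → ℝ)) (μY : Measure (Fin m → ℝ))
    [IsProbabilityMeasure μX] [IsProbabilityMeasure μY]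
    -- lower-triangular map Ž and its inverse
    (Z₁ : (Fin n → ℝ) → (Fin n → ℝ)) (Z₁inv : (Fin n → ℝ) → (Fin n → ℝ))
    (Z₂ : (Fin n → ℝ) × (Fin m → ℝ) → (Fin m → ℝ))
    (G₂ : (Fin n → ℝ) × (Fin m → ℝ) → (Fin m → ℝ))
    (hZ₁ : Measurable Z₁) (hZ₁inv : Measurable Z₁inv) (hZ₂ : Measurable Z₂)
    (hG₂ : Measurable G₂)
    (hZ₁li : ∀ x, Z₁inv (Z₁ x) = x) (hZ₁ri : ∀ u, Z₁ (Z₁inv u) = u)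
    (hZinv₁ : ∀ z : (Fin n → ℝ) × (Fin m → ℝ),
      (Z₁inv (Z₁ z.1, Z₂ z).1, G₂ (Z₁ z.1, Z₂ z)) = z)
    (hZinv₂ : ∀ w : (Fin n → ℝ) × (Fin m → ℝ),
      (Z₁ (Z₁inv w.1), Z₂ (Z₁inv w.1, G₂ w)) = w)
    -- upper-triangular map Ĥ and its inverse component
    (H₁ : (Fin n → ℝ) × (Fin m → ℝ) → (Fin n → ℝ))
    (H₂ : (Fin m → ℝ) → (Fin m → ℝ)) (H₂inv : (Fin m → ℝ) → (Fin m → ℝ))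
    (hH₁ : Measurable H₁) (hH₂ : Measurable H₂) (hH₂inv : Measurable H₂inv)
    (hH₂li : ∀ y, H₂inv (H₂ y) = y) (hH₂ri : ∀ f, H₂ (H₂inv f) = f)
    (hHbij : Function.Bijective (fun p : (Fin n → ℝ) × (Fin m → ℝ) => (H₁ p, H₂ p.2)))
    -- both represent the same joint measure
    (μUF : Measure ((Fin n → ℝ) × (Fin m → ℝ)))
    (hpushZ : μUF = Measure.map (fun p => (Z₁ p.1, Z₂ p)) (μX.prod μY))
    (hpushH : μUF = Measure.map (fun p => (H₁ p, H₂ p.2)) (μX.prod μY))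
    -- the combined map R built from F_post(x;f) = H₁(x, H₂⁻¹ f) and F_like⁻¹(f;u) = G₂(u,f)
    (R : (Fin n → ℝ) × (Fin m → ℝ) → (Fin n → ℝ) × (Fin m → ℝ))
    (hR : ∀ x f, R (x, f) = (H₁ (x, H₂inv f), G₂ (H₁ (x, H₂inv f), f))) :
    Measure.map R (μX.prod (μY.map H₂)) = (μX.map Z₁).prod μY :=   by
  have hRmeas : Measurable R := by
    have : R = fun p : (Fin n → ℝ) × (Fin m → ℝ) =>
        (H₁ (p.1, H₂inv p.2), G₂ (H₁ (p.1, H₂inv p.2), p.2)) := by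
      funext p; cases p with | mk x f => simp [hR]
    rw [this]
    exact ((hH₁.comp (measurable_fst.prodMk (hH₂inv.comp measurable_snd))).prodMk
      (hG₂.comp ((hH₁.comp (measurable_fst.prodMk (hH₂inv.comp measurable_snd))).prodMk
        measurable_snd)))
  have hg : Measurable (fun w : (Fin n → ℝ) × (Fin m → ℝ) => (w.1, G₂ w)) :=
    measurable_fst.prodMk hG₂
  have hHm : Measurable (fun p : (Fin n → ℝ) × (Fin m → ℝ) => (H₁ p, H₂ p.2)) :=
    hH₁.prodMk (hH₂.comp measurable_snd)
  have hZm : Measurable (fun p : (Fin n → ℝ) × (Fin m → ℝ) => (Z₁ p.1, Z₂ p)) :=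
    (hZ₁.comp measurable_fst).prodMk hZ₂
  have h1 : μX.prod (μY.map H₂) = (μX.prod μY).map (Prod.map id H₂) := by
    rw [← Measure.map_prod_map _ _ measurable_id hH₂, Measure.map_id]
  rw [h1, Measure.map_map hRmeas (measurable_id.prodMap hH₂)]
  have h2 : R ∘ Prod.map id H₂ =
      (fun w : (Fin n → ℝ) × (Fin m → ℝ) => (w.1, G₂ w)) ∘
        (fun p => (H₁ p, H₂ p.2)) := by
    funext p; cases p with | mk x y =>
      simp [Function.comp, hR, hH₂li, Prod.map]
  rw [h2, ← Measure.map_map hg hHm, ← hpushH, hpushZ,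
    Measure.map_map hg hZm]
  have h3 : ((fun w : (Fin n → ℝ) × (Fin m → ℝ) => (w.1, G₂ w)) ∘
      (fun p => (Z₁ p.1, Z₂ p))) = Prod.map Z₁ id := by
    funext p; cases p with | mk x y =>
      have h := congrArg Prod.snd (hZinv₁ (x, y))
      simp only at h
      simp only [Function.comp, Prod.map, id, h]
  rw [h3, ← Measure.map_prod_map _ _ hZ₁ measurable_id, Measure.map_id]
end

section
/- With the setup of the combined map R(x,f) = (F_post(x;f), F_like⁻¹(f; F_post(x;f))) built from lower- and upper-triangular maps Ž, Ĥ both pushing μ_X ⊗ μ_Y to μ_{U,F}: the mixture over x ∼ μ_X of the pushforwards of μ_F under f ↦ R₂(x,f) equals μ_Y. Precisely, for every bounded measurable φ : ℝᵐ → ℝ, ∫_{ℝⁿ} ∫_{ℝᵐ} φ(F_like⁻¹(f; F_post(x;f))) dμ_F(f) dμ_X(x) = ∫ φ dμ_Y. -/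
open MeasureTheory

/-- Theorem 2(i): In the setup of Theorem 1, the mixture over `x ∼ μ_X` of the
pushforwards of `μ_F` under `f ↦ R₂(x,f) = F_like⁻¹(f; F_post(x;f))` equals `μ_Y`. -/
theorem stmt_6 {n m : ℕ}
    (μX : Measure (Fin n → ℝ)) (μY : Measure (Fin m → ℝ))
    [IsProbabilityMeasure μX] [IsProbabilityMeasure μY]
    -- lower-triangular map Ž and its inverse
    (Z₁ : (Fin n → ℝ) → (Fin n → ℝ)) (Z₁inv : (Fin n → ℝ) → (Fin n → ℝ))
    (Z₂ : (Fin n → ℝ) × (Fin m → ℝ) → (Fin m → ℝ))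
    (G₂ : (Fin n → ℝ) × (Fin m → ℝ) → (Fin m → ℝ))
    (hZ₁ : Measurable Z₁) (hZ₁inv : Measurable Z₁inv) (hZ₂ : Measurable Z₂)
    (hG₂ : Measurable G₂)
    (hZ₁li : ∀ x, Z₁inv (Z₁ x) = x) (hZ₁ri : ∀ u, Z₁ (Z₁inv u) = u)
    (hZinv₁ : ∀ z : (Fin n → ℝ) × (Fin m → ℝ),
      (Z₁inv (Z₁ z.1, Z₂ z).1, G₂ (Z₁ z.1, Z₂ z)) = z)
    (hZinv₂ : ∀ w : (Fin n → ℝ) × (Fin m → ℝ),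
      (Z₁ (Z₁inv w.1), Z₂ (Z₁inv w.1, G₂ w)) = w)
    -- upper-triangular map Ĥ and its inverse component
    (H₁ : (Fin n → ℝ) × (Fin m → ℝ) → (Fin n → ℝ))
    (H₂ : (Fin m → ℝ) → (Fin m → ℝ)) (H₂inv : (Fin m → ℝ) → (Fin m → ℝ))
    (hH₁ : Measurable H₁) (hH₂ : Measurable H₂) (hH₂inv : Measurable H₂inv)
    (hH₂li : ∀ y, H₂inv (H₂ y) = y) (hH₂ri : ∀ f, H₂ (H₂inv f) = f)
    (hHbij : Function.Bijective (fun p : (Fin n → ℝ) × (Fin m → ℝ) => (H₁ p, H₂ p.2)))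
    -- both represent the same joint measure
    (μUF : Measure ((Fin n → ℝ) × (Fin m → ℝ)))
    (hpushZ : μUF = Measure.map (fun p => (Z₁ p.1, Z₂ p)) (μX.prod μY))
    (hpushH : μUF = Measure.map (fun p => (H₁ p, H₂ p.2)) (μX.prod μY))
    (φ : (Fin m → ℝ) → ℝ) (hφ : Measurable φ) (hbd : ∃ C, ∀ y, |φ y| ≤ C) :
    ∫ x, ∫ f, φ (G₂ (H₁ (x, H₂inv f), f)) ∂(μY.map H₂) ∂μX = ∫ y, φ y ∂μY := by
  obtain ⟨C, hC⟩ := hbd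
  -- Step 1: change variables in the inner integral
  have hinner : ∀ x, ∫ f, φ (G₂ (H₁ (x, H₂inv f), f)) ∂(μY.map H₂)
      = ∫ y, φ (G₂ (H₁ (x, y), H₂ y)) ∂μY := by
    intro x
    rw [integral_map hH₂.aemeasurable]
    · simp [hH₂li]
    · exact ((hφ.comp (hG₂.comp (((hH₁.comp (measurable_const.prodMk
        hH₂inv)).prodMk measurable_id)))).aestronglyMeasurable)
  simp_rw [hinner]
  -- Step 2: combine into an integral over the product measure
  have hmeasH : Measurable fun p : (Fin n → ℝ) × (Fin m → ℝ) => (H₁ p, H₂ p.2) :=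
    hH₁.prodMk (hH₂.comp measurable_snd)
  have hmeasg : Measurable fun p : (Fin n → ℝ) × (Fin m → ℝ) =>
      φ (G₂ (H₁ p, H₂ p.2)) := hφ.comp (hG₂.comp hmeasH)
  have hint : Integrable (fun p : (Fin n → ℝ) × (Fin m → ℝ) =>
      φ (G₂ (H₁ p, H₂ p.2))) (μX.prod μY) := by
    refine (integrable_const C).mono' hmeasg.aestronglyMeasurable ?_
    exact Filter.Eventually.of_forall fun p => by simpa using hC _
  have hfub := MeasureTheory.integral_prod _ hint
  have : (∫ x, ∫ y, φ (G₂ (H₁ (x, y), H₂ y)) ∂μY ∂μX)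
      = ∫ p : (Fin n → ℝ) × (Fin m → ℝ), φ (G₂ (H₁ p, H₂ p.2)) ∂(μX.prod μY) := by
    rw [hfub]
  rw [this]
  -- Step 3: rewrite as an integral over μUF, then via Z
  have h1 : (∫ p : (Fin n → ℝ) × (Fin m → ℝ), φ (G₂ (H₁ p, H₂ p.2)) ∂(μX.prod μY))
      = ∫ z, φ (G₂ z) ∂μUF := by
    rw [hpushH]
    exact (integral_map hmeasH.aemeasurable
      ((hφ.comp hG₂).aestronglyMeasurable : AEStronglyMeasurable
        (fun z : (Fin n → ℝ) × (Fin m → ℝ) => φ (G₂ z)) _)).symm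
  have h2 : (∫ z, φ (G₂ z) ∂μUF)
      = ∫ p : (Fin n → ℝ) × (Fin m → ℝ), φ (G₂ (Z₁ p.1, Z₂ p)) ∂(μX.prod μY) := by
    rw [hpushZ]
    exact integral_map ((hZ₁.comp measurable_fst).prodMk hZ₂).aemeasurable
      ((hφ.comp hG₂).aestronglyMeasurable : AEStronglyMeasurable
        (fun z : (Fin n → ℝ) × (Fin m → ℝ) => φ (G₂ z)) _)
  have hkey : ∀ p : (Fin n → ℝ) × (Fin m → ℝ), G₂ (Z₁ p.1, Z₂ p) = p.2 :=
    fun p => congrArg Prod.snd (hZinv₁ p)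
  rw [h1, h2]
  simp_rw [hkey]
  have h3 := integral_map (μ := μX.prod μY) measurable_snd.aemeasurable
    (hφ.aestronglyMeasurable : AEStronglyMeasurable (fun y : Fin m → ℝ => φ y) _)
  rw [Measure.map_snd_prod] at h3
  simp only [measure_univ, one_smul] at h3
  exact h3.symm
end

section
/- Let S : ℝⁿ × ℝᵐ → ℝⁿ × ℝᵐ be a bijection with inverse R, and suppose (i) the map (u,y) ↦ (u, S₂(u,y)) pushes μ_U ⊗ μ_Y forward to μ_{U,F} (loss J₁(S)=0), and (ii) S pushes μ_U ⊗ μ_Y forward to μ_X ⊗ μ_F (loss J₃(S)=0). Then the map (x,f) ↦ (R₁(x,f), f) pushes μ_X ⊗ μ_F forward to μ_{U,F} (loss J₂(R)=0). -/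
open MeasureTheory

/-- Theorem 4(ii): If `S` is a bijection with inverse `R`, `J₁(S)=0`
(i.e. `(u,y) ↦ (u, S₂(u,y))` pushes `μ_U ⊗ μ_Y` to `μ_{U,F}`) and `J₃(S)=0`
(i.e. `S` pushes `μ_U ⊗ μ_Y` to `μ_X ⊗ μ_F`), then `J₂(R)=0`
(i.e. `(x,f) ↦ (R₁(x,f), f)` pushes `μ_X ⊗ μ_F` to `μ_{U,F}`). -/
theorem stmt_7 {n m : ℕ}
    (μU μX : Measure (Fin n → ℝ)) (μY μF : Measure (Fin m → ℝ))
    [IsProbabilityMeasure μU] [IsProbabilityMeasure μX]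
    [IsProbabilityMeasure μY] [IsProbabilityMeasure μF]
    (μUF : Measure ((Fin n → ℝ) × (Fin m → ℝ))) [IsProbabilityMeasure μUF]
    (hmargU : μUF.map Prod.fst = μU) (hmargF : μUF.map Prod.snd = μF)
    (S R : (Fin n → ℝ) × (Fin m → ℝ) → (Fin n → ℝ) × (Fin m → ℝ))
    (hS : Measurable S) (hR : Measurable R)
    (hRS : ∀ z, R (S z) = z) (hSR : ∀ z, S (R z) = z)
    (hJ₁ : Measure.map (fun p : (Fin n → ℝ) × (Fin m → ℝ) => (p.1, (S p).2)) (μU.prod μY)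
            = μUF)
    (hJ₃ : Measure.map S (μU.prod μY) = μX.prod μF) :
    Measure.map (fun p : (Fin n → ℝ) × (Fin m → ℝ) => ((R p).1, p.2)) (μX.prod μF)
      = μUF := by
  rw [← hJ₃, Measure.map_map (hR.fst.prodMk measurable_snd) hS]
  have : ((fun p : (Fin n → ℝ) × (Fin m → ℝ) => ((R p).1, p.2)) ∘ S)
      = fun p => (p.1, (S p).2) := by
    funext z; simp [Function.comp, hRS z]
  rw [this, hJ₁]
end

section
/- Let ν be a probability measure on ℝⁿ × ℝᵐ with first marginal μ_U, and let S₂ : ℝⁿ × ℝᵐ → ℝᵐ be measurable. If the pushforward of μ_U ⊗ μ_Y under (u,y) ↦ (u, S₂(u,y)) equals ν, then for μ_U-almost every u, the measure (S₂(u,·))_# μ_Y is a version of the conditional distribution of the second coordinate given the first coordinate equals u under ν. -/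
open MeasureTheory ProbabilityTheory

/-- Corollary 1(i): If `ν` on `ℝⁿ × ℝᵐ` has first marginal `μ_U` and the
pushforward of `μ_U ⊗ μ_Y` under `(u,y) ↦ (u, S₂(u,y))` equals `ν`, then for `μ_U`-a.e. `u`,
`(S₂(u,·))_# μ_Y` is a version of the conditional distribution of the second coordinate
given the first equals `u`, i.e. it agrees a.e. with any Markov kernel disintegrating `ν`. -/
theorem stmt_9 {n m : ℕ}
    (μU : Measure (Fin n → ℝ)) (μY : Measure (Fin m → ℝ))
    [IsProbabilityMeasure μU] [IsProbabilityMeasure μY]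
    (ν : Measure ((Fin n → ℝ) × (Fin m → ℝ))) [IsProbabilityMeasure ν]
    (hmarg : ν.map Prod.fst = μU)
    (S₂ : (Fin n → ℝ) × (Fin m → ℝ) → (Fin m → ℝ)) (hS₂ : Measurable S₂)
    (hpush : Measure.map (fun p : (Fin n → ℝ) × (Fin m → ℝ) => (p.1, S₂ p)) (μU.prod μY)
              = ν)
    (κ : Kernel (Fin n → ℝ) (Fin m → ℝ)) [IsMarkovKernel κ]
    (hκ : ν = μU.compProd κ) :
    ∀ᵐ u ∂μU, κ u = Measure.map (fun y => S₂ (u, y)) μY := by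
  have hfst : ν.fst = μU := by rw [Measure.fst, hmarg]
  set κ' : Kernel (Fin n → ℝ) (Fin m → ℝ) :=
    Kernel.map ((Kernel.deterministic id measurable_id).prod (Kernel.const _ μY)) S₂ with hκ'def
  have hκ'app : ∀ u, κ' u = Measure.map (fun y => S₂ (u, y)) μY := by
    intro u
    rw [hκ'def, Kernel.map_apply _ hS₂, Kernel.prod_apply, Kernel.deterministic_apply,
      Kernel.const_apply, Measure.dirac_prod, Measure.map_map hS₂ (by fun_prop)]
    rfl
  have : IsMarkovKernel κ' := by
    rw [hκ'def]; exact Kernel.IsMarkovKernel.map _ hS₂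
  -- ν = ν.fst ⊗ₘ κ'
  have hcomp' : ν = ν.fst ⊗ₘ κ' := by
    rw [hfst, ← hpush]
    ext s hs
    rw [Measure.map_apply (measurable_fst.prodMk hS₂) hs,
      Measure.compProd_apply hs, Measure.prod_apply ((measurable_fst.prodMk hS₂) hs)]
    congr 1
    ext u
    rw [hκ'app u, Measure.map_apply (by fun_prop) (measurable_prodMk_left hs)]
    rfl
  have h1 := eq_condKernel_of_measure_eq_compProd κ (by rw [hfst, ← hκ])
  have h2 := eq_condKernel_of_measure_eq_compProd κ' hcomp'
  rw [hfst] at h1 h2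
  filter_upwards [h1, h2] with u h1 h2
  rw [h1, ← hκ'app u, h2]
end
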